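/- For every integer i ≤ 0, integer r ≥ 1, and Dirichlet character χ mod N, the value L_q(χ,i)(q^r) = Σ_{n≥1} χ(n) [n]^{−i} q^{nr} is a rational function of q, with no pole at q = 0 (it vanishes at q = 0) and all poles lying on the unit circle (roots of unity). -/

import Mathlib

open PowerSeries

/-- The quantum integer `[n] = 1 + q + ⋯ + q^{n-1}` as a power series over `ℂ`. -/
noncomputable def qIntPS (n : ℕ) : PowerSeries ℂ := ∑ i ∈ Finset.range n, (X : PowerSeries ℂ) ^ i

/-- The series `L_q(χ,i)(q^r) = Σ_{n≥1} χ(n) [n]^{-i} q^{nr}` for `i ≤ 0`; the `n`-th term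
has order at least `n`, so the `d`-th coefficient only involves `n ≤ d`. -/
noncomputable def LqValue (N : ℕ) [NeZero N] (χ : DirichletCharacter ℂ N) (i : ℤ) (r : ℕ) :
    PowerSeries ℂ :=
  PowerSeries.mk fun d => coeff d
    (∑ n ∈ Finset.Icc 1 d, PowerSeries.C (χ ((n : ℕ) : ZMod N)) * qIntPS n ^ i.natAbs *
      X ^ (n * r))

namespace LqAux

open Finset

set_option linter.unusedSectionVars false

/-- coeff of `g * X^k` vanishes below `k`. -/
lemma coeff_mul_Xpow_eq_zero (g : PowerSeries ℂ) {k d : ℕ} (h : d < k) :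
    PowerSeries.coeff d (g * X ^ k) = 0 := by
  rw [PowerSeries.coeff_mul_X_pow', if_neg (by omega)]

variable (N : ℕ) [NeZero N] (χ : DirichletCharacter ℂ N)

/-- partial sum `Σ_{a < n ≤ b} χ(n) X^{ns}` -/
noncomputable def W (s a b : ℕ) : PowerSeries ℂ :=
  ∑ n ∈ Ioc a b, PowerSeries.C (χ ((n : ℕ) : ZMod N)) * X ^ (n * s)

/-- partial sum of `LqValue` -/
noncomputable def S (m r D : ℕ) : PowerSeries ℂ :=
  ∑ n ∈ Ioc 0 D, PowerSeries.C (χ ((n : ℕ) : ZMod N)) * qIntPS n ^ m * X ^ (n * r)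

/-- the denominator polynomial -/
noncomputable def denP (N m r : ℕ) : Polynomial ℂ :=
  (Polynomial.X - 1) ^ m * ∏ j ∈ range (m + 1), (1 - Polynomial.X ^ (N * (r + j)))

/-- the numerator polynomial -/
noncomputable def numP (m r : ℕ) : Polynomial ℂ :=
  ∑ j ∈ range (m + 1), Polynomial.C ((-1) ^ (j + m) * (m.choose j : ℂ)) *
    ((∑ n ∈ Ioc 0 N, Polynomial.C (χ ((n : ℕ) : ZMod N)) * Polynomial.X ^ (n * (r + j))) *
      ∏ j' ∈ (range (m + 1)).erase j, (1 - Polynomial.X ^ (N * (r + j'))))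

lemma chi_add_N (n : ℕ) : χ (((N + n : ℕ) : ZMod N)) = χ ((n : ℕ) : ZMod N) := by
  push_cast
  rw [ZMod.natCast_self, zero_add]

lemma W_mul_Xpow (s D : ℕ) : W N χ s 0 D * X ^ (N * s) = W N χ s N (N + D) := by
  rw [W, W, Finset.sum_mul]
  rw [show Ioc N (N + D) = (Ioc 0 D).map (addLeftEmbedding N) by
    rw [Finset.map_add_left_Ioc]; ring_nf]
  rw [Finset.sum_map]
  refine Finset.sum_congr rfl fun n hn => ?_
  simp only [addLeftEmbedding_apply]
  rw [chi_add_N, mul_assoc, ← pow_add]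
  ring_nf

lemma W_key (s D : ℕ) :
    W N χ s 0 D * (1 - X ^ (N * s)) = W N χ s 0 N - W N χ s D (N + D) := by
  rw [mul_sub, mul_one, W_mul_Xpow]
  have h1 : W N χ s 0 D + W N χ s D (N + D) = W N χ s 0 (N + D) :=
    Finset.sum_Ioc_consecutive _ (Nat.zero_le D) (Nat.le_add_left D N)
  have h2 : W N χ s 0 N + W N χ s N (N + D) = W N χ s 0 (N + D) :=
    Finset.sum_Ioc_consecutive _ (Nat.zero_le N) (Nat.le_add_right N D)
  linear_combination h1 - h2

lemma binom (n m : ℕ) :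
    ((X : PowerSeries ℂ) ^ n - 1) ^ m
      = ∑ j ∈ range (m + 1),
          PowerSeries.C ((-1) ^ (j + m) * (m.choose j : ℂ)) * X ^ (n * j) := by
  rw [sub_pow]
  refine Finset.sum_congr rfl fun j hj => ?_
  rw [map_mul, map_pow, map_neg, map_one, map_natCast, ← pow_mul]
  ring_nf

/-- the exact rational identity for partial sums -/
lemma key (m r D : ℕ) :
    S N χ m r D * ((X - 1) ^ m * ∏ j ∈ range (m + 1), (1 - X ^ (N * (r + j)))) =
      ∑ j ∈ range (m + 1), PowerSeries.C ((-1) ^ (j + m) * (m.choose j : ℂ)) *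
        ((W N χ (r + j) 0 N - W N χ (r + j) D (N + D)) *
          ∏ j' ∈ (range (m + 1)).erase j, (1 - X ^ (N * (r + j')))) := by
  have step1 : ∀ n : ℕ,
      (PowerSeries.C (χ ((n : ℕ) : ZMod N)) * qIntPS n ^ m * X ^ (n * r)) *
        ((X - 1) ^ m * ∏ j ∈ range (m + 1), (1 - X ^ (N * (r + j)))) =
      ∑ j ∈ range (m + 1), PowerSeries.C ((-1) ^ (j + m) * (m.choose j : ℂ)) *
        ((PowerSeries.C (χ ((n : ℕ) : ZMod N)) * X ^ (n * (r + j))) *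
          ∏ j' ∈ range (m + 1), (1 - X ^ (N * (r + j')))) := by
    intro n
    have hq : qIntPS n ^ m * (X - 1) ^ m = ((X : PowerSeries ℂ) ^ n - 1) ^ m := by
      rw [← mul_pow, qIntPS, geom_sum_mul]
    calc (PowerSeries.C (χ ((n : ℕ) : ZMod N)) * qIntPS n ^ m * X ^ (n * r)) *
          ((X - 1) ^ m * ∏ j ∈ range (m + 1), (1 - X ^ (N * (r + j))))
        = PowerSeries.C (χ ((n : ℕ) : ZMod N)) * (qIntPS n ^ m * (X - 1) ^ m) *
            X ^ (n * r) * ∏ j ∈ range (m + 1), (1 - X ^ (N * (r + j))) := by ring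
      _ = PowerSeries.C (χ ((n : ℕ) : ZMod N)) *
            (∑ j ∈ range (m + 1),
              PowerSeries.C ((-1) ^ (j + m) * (m.choose j : ℂ)) * X ^ (n * j)) *
            X ^ (n * r) * ∏ j' ∈ range (m + 1), (1 - X ^ (N * (r + j'))) := by
          rw [hq, binom]
      _ = _ := by
          rw [Finset.mul_sum, Finset.sum_mul, Finset.sum_mul]
          refine Finset.sum_congr rfl fun j hj => ?_
          have hxx : (X : PowerSeries ℂ) ^ (n * j) * X ^ (n * r) = X ^ (n * (r + j)) := by
            rw [← pow_add]; ring_nf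
          calc PowerSeries.C (χ ((n : ℕ) : ZMod N)) *
                (PowerSeries.C ((-1) ^ (j + m) * (m.choose j : ℂ)) * X ^ (n * j)) *
                X ^ (n * r) * ∏ j' ∈ range (m + 1), (1 - X ^ (N * (r + j')))
              = PowerSeries.C ((-1) ^ (j + m) * (m.choose j : ℂ)) *
                ((PowerSeries.C (χ ((n : ℕ) : ZMod N)) * (X ^ (n * j) * X ^ (n * r))) *
                  ∏ j' ∈ range (m + 1), (1 - X ^ (N * (r + j')))) := by ring
            _ = _ := by rw [hxx]
  rw [S, Finset.sum_mul]
  calc (∑ n ∈ Ioc 0 D, (PowerSeries.C (χ ((n : ℕ) : ZMod N)) * qIntPS n ^ m * X ^ (n * r)) *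
          ((X - 1) ^ m * ∏ j ∈ range (m + 1), (1 - X ^ (N * (r + j)))))
      = ∑ n ∈ Ioc 0 D, ∑ j ∈ range (m + 1),
          PowerSeries.C ((-1) ^ (j + m) * (m.choose j : ℂ)) *
            ((PowerSeries.C (χ ((n : ℕ) : ZMod N)) * X ^ (n * (r + j))) *
              ∏ j' ∈ range (m + 1), (1 - X ^ (N * (r + j')))) :=
        Finset.sum_congr rfl fun n _ => step1 n
    _ = ∑ j ∈ range (m + 1), PowerSeries.C ((-1) ^ (j + m) * (m.choose j : ℂ)) *
          (W N χ (r + j) 0 D * ∏ j' ∈ range (m + 1), (1 - X ^ (N * (r + j')))) := by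
        rw [Finset.sum_comm]
        refine Finset.sum_congr rfl fun j hj => ?_
        rw [W, Finset.sum_mul, Finset.mul_sum]
    _ = _ := by
        refine Finset.sum_congr rfl fun j hj => ?_
        rw [← Finset.mul_prod_erase _ _ hj, show W N χ (r + j) 0 D *
            ((1 - X ^ (N * (r + j))) * ∏ j' ∈ (range (m + 1)).erase j,
              (1 - X ^ (N * (r + j')))) = (W N χ (r + j) 0 D * (1 - X ^ (N * (r + j)))) *
              ∏ j' ∈ (range (m + 1)).erase j, (1 - X ^ (N * (r + j'))) by ring,
          W_key]

lemma coeff_S_stable (m r : ℕ) (hr : 1 ≤ r) {d D : ℕ} (h : d ≤ D) :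
    PowerSeries.coeff d (S N χ m r D) = PowerSeries.coeff d (S N χ m r d) := by
  rw [S, S, ← Finset.sum_Ioc_consecutive _ (Nat.zero_le d) h, map_add]
  have hz : PowerSeries.coeff d
      (∑ n ∈ Ioc d D, PowerSeries.C (χ ((n : ℕ) : ZMod N)) * qIntPS n ^ m * X ^ (n * r))
      = 0 := by
    rw [map_sum]
    refine Finset.sum_eq_zero fun n hn => ?_
    have hn' : d < n := (Finset.mem_Ioc.mp hn).1
    exact coeff_mul_Xpow_eq_zero _ (lt_of_lt_of_le hn' (Nat.le_mul_of_pos_right n hr))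
  rw [hz, add_zero]

lemma coeff_LqValue (i : ℤ) (r d : ℕ) :
    PowerSeries.coeff d (LqValue N χ i r) = PowerSeries.coeff d (S N χ i.natAbs r d) := by
  rw [LqValue, PowerSeries.coeff_mk, S]
  congr 1

/-- the remainder has zero coefficient in degree `d` -/
lemma coeff_rem_zero (m r d : ℕ) (hr : 1 ≤ r) :
    PowerSeries.coeff d
      (∑ j ∈ range (m + 1), PowerSeries.C ((-1) ^ (j + m) * (m.choose j : ℂ)) *
        (W N χ (r + j) d (N + d) *
          ∏ j' ∈ (range (m + 1)).erase j, (1 - X ^ (N * (r + j'))))) = 0 := by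
  rw [map_sum]
  refine Finset.sum_eq_zero fun j hj => ?_
  rw [W, Finset.sum_mul, Finset.mul_sum, map_sum]
  refine Finset.sum_eq_zero fun n hn => ?_
  have hn' : d < n := (Finset.mem_Ioc.mp hn).1
  have hlt : d < n * (r + j) :=
    lt_of_lt_of_le hn' (Nat.le_mul_of_pos_right n (lt_of_lt_of_le hr (Nat.le_add_right r j)))
  calc PowerSeries.coeff d (PowerSeries.C ((-1) ^ (j + m) * (m.choose j : ℂ)) *
        (PowerSeries.C (χ ((n : ℕ) : ZMod N)) * X ^ (n * (r + j)) *
          ∏ j' ∈ (range (m + 1)).erase j, (1 - X ^ (N * (r + j')))))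
      = PowerSeries.coeff d ((PowerSeries.C ((-1) ^ (j + m) * (m.choose j : ℂ)) *
          PowerSeries.C (χ ((n : ℕ) : ZMod N)) *
          ∏ j' ∈ (range (m + 1)).erase j, (1 - X ^ (N * (r + j')))) * X ^ (n * (r + j))) := by
        congr 1; ring
    _ = 0 := coeff_mul_Xpow_eq_zero _ hlt

lemma denP_coe (m r : ℕ) :
    ((denP N m r : Polynomial ℂ) : PowerSeries ℂ)
      = (X - 1) ^ m * ∏ j ∈ range (m + 1), (1 - X ^ (N * (r + j))) := by
  rw [denP, ← Polynomial.coeToPowerSeries.ringHom_apply, map_mul, map_pow, map_sub, map_prod]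
  simp [Polynomial.coeToPowerSeries.ringHom_apply]

lemma numP_coe (m r : ℕ) :
    ((numP N χ m r : Polynomial ℂ) : PowerSeries ℂ)
      = ∑ j ∈ range (m + 1), PowerSeries.C ((-1) ^ (j + m) * (m.choose j : ℂ)) *
          (W N χ (r + j) 0 N *
            ∏ j' ∈ (range (m + 1)).erase j, (1 - X ^ (N * (r + j')))) := by
  rw [numP, ← Polynomial.coeToPowerSeries.ringHom_apply]
  simp only [map_sum, map_mul, map_prod, map_pow, map_sub, map_one,
    Polynomial.coeToPowerSeries.ringHom_apply, Polynomial.coe_X, Polynomial.coe_C, W]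

end LqAux

open LqAux Finset in
theorem LqValue_rational (N : ℕ) [NeZero N] (χ : DirichletCharacter ℂ N) (i : ℤ)
    (hi : i ≤ 0) (r : ℕ) (hr : 1 ≤ r) :
    ∃ num den : Polynomial ℂ,
      (∀ z : ℂ, den.eval z = 0 → ∃ k : ℕ, 0 < k ∧ z ^ k = 1) ∧
      num.eval 0 = 0 ∧
      LqValue N χ i r * (den : PowerSeries ℂ) = (num : PowerSeries ℂ) := by
  refine ⟨numP N χ i.natAbs r, denP N i.natAbs r, ?_, ?_, ?_⟩
  · -- poles at roots of unity
    intro z hz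
    rw [denP, Polynomial.eval_mul, Polynomial.eval_pow, Polynomial.eval_prod,
      mul_eq_zero] at hz
    rcases hz with hz | hz
    · obtain ⟨h1, -⟩ := pow_eq_zero_iff'.mp hz
      rw [Polynomial.eval_sub, Polynomial.eval_X, Polynomial.eval_one, sub_eq_zero] at h1
      exact ⟨1, one_pos, by simp [h1]⟩
    · rw [Finset.prod_eq_zero_iff] at hz
      obtain ⟨j, hj, hj0⟩ := hz
      refine ⟨N * (r + j), ?_, ?_⟩
      · have hN : 0 < N := Nat.pos_of_ne_zero (NeZero.ne N)
        positivity
      · rw [Polynomial.eval_sub, Polynomial.eval_one, Polynomial.eval_pow,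
          Polynomial.eval_X] at hj0
        linear_combination -hj0
  · -- num eval 0 = 0
    rw [numP, Polynomial.eval_finset_sum]
    refine Finset.sum_eq_zero fun j hj => ?_
    have h0 : (∑ n ∈ Ioc 0 N, Polynomial.C (χ ((n : ℕ) : ZMod N)) *
        Polynomial.X ^ (n * (r + j))).eval 0 = 0 := by
      rw [Polynomial.eval_finset_sum]
      refine Finset.sum_eq_zero fun n hn => ?_
      have hn1 : 0 < n := (Finset.mem_Ioc.mp hn).1
      have hrj : 0 < r + j := lt_of_lt_of_le hr (Nat.le_add_right r j)
      rw [Polynomial.eval_mul, Polynomial.eval_pow, Polynomial.eval_X, zero_pow, mul_zero]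
      positivity
    rw [Polynomial.eval_mul, Polynomial.eval_mul, h0, zero_mul, mul_zero]
  · -- the power series identity
    rw [denP_coe, numP_coe]
    ext d
    have hstep1 : PowerSeries.coeff d (LqValue N χ i r *
          ((X - 1) ^ i.natAbs * ∏ j ∈ range (i.natAbs + 1), (1 - X ^ (N * (r + j)))))
        = PowerSeries.coeff d (S N χ i.natAbs r d *
          ((X - 1) ^ i.natAbs * ∏ j ∈ range (i.natAbs + 1), (1 - X ^ (N * (r + j))))) := by
      rw [PowerSeries.coeff_mul, PowerSeries.coeff_mul]
      refine Finset.sum_congr rfl fun p hp => ?_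
      have hp1 : p.1 ≤ d := Finset.HasAntidiagonal.antidiagonal.fst_le hp
      rw [coeff_LqValue, coeff_S_stable N χ i.natAbs r hr hp1,
        ← coeff_S_stable N χ i.natAbs r hr (le_refl p.1)]
    rw [hstep1, key]
    have hsplit : ∑ j ∈ range (i.natAbs + 1),
          PowerSeries.C ((-1) ^ (j + i.natAbs) * (i.natAbs.choose j : ℂ)) *
          ((W N χ (r + j) 0 N - W N χ (r + j) d (N + d)) *
            ∏ j' ∈ (range (i.natAbs + 1)).erase j, (1 - X ^ (N * (r + j'))))
        = (∑ j ∈ range (i.natAbs + 1),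
            PowerSeries.C ((-1) ^ (j + i.natAbs) * (i.natAbs.choose j : ℂ)) *
            (W N χ (r + j) 0 N *
              ∏ j' ∈ (range (i.natAbs + 1)).erase j, (1 - X ^ (N * (r + j')))))
          - ∑ j ∈ range (i.natAbs + 1),
            PowerSeries.C ((-1) ^ (j + i.natAbs) * (i.natAbs.choose j : ℂ)) *
            (W N χ (r + j) d (N + d) *
              ∏ j' ∈ (range (i.natAbs + 1)).erase j, (1 - X ^ (N * (r + j')))) := by
      rw [← Finset.sum_sub_distrib]
      refine Finset.sum_congr rfl fun j hj => ?_
      ring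
    rw [hsplit, map_sub, coeff_rem_zero N χ i.natAbs r d hr, sub_zero]
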